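/- Let δ > 0 and let p_δ : ℝ → ℝ be the Cauchy density p_δ(y) = δ/(π(δ² + y²)). Then for every x ∈ ℝ, ∫_ℝ |p_δ(ξ + x) − p_δ(ξ)| dξ ≤ (2/(πδ))·|x|. -/

import Mathlib

open Real MeasureTheory Set Filter

private lemma arctan_le_self' {t : ℝ} (ht : 0 ≤ t) : Real.arctan t ≤ t := by
  have h1 : 0 ≤ Real.arctan t := by
    simpa [Real.arctan_zero] using Real.arctan_strictMono.monotone ht
  calc Real.arctan t ≤ Real.tan (Real.arctan t) :=
        Real.le_tan h1 (Real.arctan_lt_pi_div_two t)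
    _ = t := Real.tan_arctan t

private lemma cauchy_hasDerivAt (δ : ℝ) (hδ : 0 < δ) (ξ : ℝ) :
    HasDerivAt (fun y : ℝ => (1 / Real.pi) * Real.arctan (y / δ))
      (δ / (Real.pi * (δ ^ 2 + ξ ^ 2))) ξ := by
  have h1 : HasDerivAt (fun y : ℝ => Real.arctan (y / δ))
      ((1 / (1 + (ξ / δ) ^ 2)) * (1 / δ)) ξ := by
    have := (Real.hasDerivAt_arctan (ξ / δ)).comp ξ ((hasDerivAt_id ξ).div_const δ)
    simpa [Function.comp_def] using this
  have h2 := h1.const_mul (1 / Real.pi)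
  refine h2.congr_deriv ?_
  have hπ : Real.pi ≠ 0 := Real.pi_ne_zero
  have hd : δ ^ 2 + ξ ^ 2 ≠ 0 := by positivity
  have h3 : (1 : ℝ) + (ξ / δ) ^ 2 ≠ 0 := by positivity
  field_simp

private lemma cauchy_integrable (δ : ℝ) (hδ : 0 < δ) :
    Integrable (fun ξ : ℝ => δ / (Real.pi * (δ ^ 2 + ξ ^ 2))) := by
  have h1 : Integrable (fun ξ : ℝ => (1 + ξ ^ 2)⁻¹) := integrable_inv_one_add_sq
  have h2 := (h1.comp_div hδ.ne').const_mul (1 / (Real.pi * δ))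
  have heq : (fun ξ : ℝ => δ / (Real.pi * (δ ^ 2 + ξ ^ 2))) =
      fun ξ => (1 / (Real.pi * δ)) * (1 + (ξ / δ) ^ 2)⁻¹ := by
    funext ξ
    have hd : δ ^ 2 + ξ ^ 2 ≠ 0 := by positivity
    have h3 : (1 : ℝ) + (ξ / δ) ^ 2 ≠ 0 := by positivity
    field_simp
  rw [heq]
  exact h2

private lemma cauchy_tendsto_atTop (δ : ℝ) (hδ : 0 < δ) :
    Tendsto (fun y : ℝ => (1 / Real.pi) * Real.arctan (y / δ)) atTop
      (nhds ((1 / Real.pi) * (Real.pi / 2))) := by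
  have h1 : Tendsto (fun y : ℝ => y / δ) atTop atTop :=
    tendsto_id.atTop_div_const hδ
  exact ((Real.tendsto_arctan_atTop.mono_right nhdsWithin_le_nhds).comp h1).const_mul _

private lemma cauchy_tendsto_atBot (δ : ℝ) (hδ : 0 < δ) :
    Tendsto (fun y : ℝ => (1 / Real.pi) * Real.arctan (y / δ)) atBot
      (nhds ((1 / Real.pi) * (-(Real.pi / 2)))) := by
  have h1 : Tendsto (fun y : ℝ => y / δ) atBot atBot :=
    tendsto_id.atBot_div_const hδ
  exact ((Real.tendsto_arctan_atBot.mono_right nhdsWithin_le_nhds).comp h1).const_mul _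

private lemma cauchy_variation_nonneg (δ : ℝ) (hδ : 0 < δ) (x : ℝ) (hx : 0 ≤ x) :
    ∫ ξ : ℝ, |δ / (Real.pi * (δ ^ 2 + (ξ + x) ^ 2)) -
        δ / (Real.pi * (δ ^ 2 + ξ ^ 2))| ≤ (2 / (Real.pi * δ)) * x := by
  set p : ℝ → ℝ := fun ξ => δ / (Real.pi * (δ ^ 2 + ξ ^ 2)) with hp
  set F : ℝ → ℝ := fun y => (1 / Real.pi) * Real.arctan (y / δ) with hF
  have hπ : 0 < Real.pi := Real.pi_pos
  -- integrability
  have hpint : Integrable p := cauchy_integrable δ hδ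
  have hpint' : Integrable (fun ξ => p (ξ + x)) := hpint.comp_add_right x
  have hdiff : Integrable (fun ξ => p (ξ + x) - p ξ) := hpint'.sub hpint
  have habs : Integrable (fun ξ => |p (ξ + x) - p ξ|) := hdiff.abs
  -- derivative of G
  have hG : ∀ ξ : ℝ, HasDerivAt (fun y => F (y + x) - F y) (p (ξ + x) - p ξ) ξ := by
    intro ξ
    have h1 : HasDerivAt (fun y : ℝ => F (y + x)) (p (ξ + x)) ξ := by
      have h0 := (cauchy_hasDerivAt δ hδ (ξ + x)).comp ξ ((hasDerivAt_id ξ).add_const x)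
      rw [mul_one] at h0
      exact h0
    exact h1.sub (cauchy_hasDerivAt δ hδ ξ)
  set c : ℝ := -x / 2 with hc
  -- monotonicity comparison on Iic c
  have hmono : ∀ ξ ∈ Iic c, p ξ ≤ p (ξ + x) := by
    intro ξ hξ
    simp only [mem_Iic, hc] at hξ
    have hsq : (ξ + x) ^ 2 ≤ ξ ^ 2 := by nlinarith
    have h1 : 0 < Real.pi * (δ ^ 2 + (ξ + x) ^ 2) := by positivity
    simp only [hp]
    gcongr
  have hmono' : ∀ ξ ∈ Ioi c, p (ξ + x) ≤ p ξ := by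
    intro ξ hξ
    simp only [mem_Ioi, hc] at hξ
    have hsq : ξ ^ 2 ≤ (ξ + x) ^ 2 := by nlinarith
    have h1 : 0 < Real.pi * (δ ^ 2 + ξ ^ 2) := by positivity
    simp only [hp]
    gcongr
  -- limits of G at infinity
  have hTop : Tendsto (fun y => F (y + x) - F y) atTop (nhds 0) := by
    have h1 : Tendsto (fun y : ℝ => F (y + x)) atTop
        (nhds ((1 / Real.pi) * (Real.pi / 2))) :=
      (cauchy_tendsto_atTop δ hδ).comp (tendsto_atTop_add_const_right _ x tendsto_id)
    have h2 := h1.sub (cauchy_tendsto_atTop δ hδ)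
    rw [sub_self] at h2
    exact h2
  have hBot : Tendsto (fun y => F (y + x) - F y) atBot (nhds 0) := by
    have h1 : Tendsto (fun y : ℝ => F (y + x)) atBot
        (nhds ((1 / Real.pi) * (-(Real.pi / 2)))) :=
      (cauchy_tendsto_atBot δ hδ).comp (tendsto_atBot_add_const_right _ x tendsto_id)
    have h2 := h1.sub (cauchy_tendsto_atBot δ hδ)
    rw [sub_self] at h2
    exact h2
  -- the two half-line integrals
  have hIic : ∫ ξ in Iic c, |p (ξ + x) - p ξ| = (F (c + x) - F c) - 0 := by
    rw [← integral_Iic_of_hasDerivAt_of_tendsto' (f' := fun ξ => p (ξ + x) - p ξ)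
        (fun ξ _ => hG ξ) hdiff.integrableOn hBot]
    refine setIntegral_congr_fun measurableSet_Iic fun ξ hξ => ?_
    exact abs_of_nonneg (sub_nonneg.2 (hmono ξ hξ))
  have hIoi : ∫ ξ in Ioi c, |p (ξ + x) - p ξ| = (F (c + x) - F c) := by
    have h2 : ∫ ξ in Ioi c, |p (ξ + x) - p ξ| = ∫ ξ in Ioi c, -(p (ξ + x) - p ξ) := by
      refine setIntegral_congr_fun measurableSet_Ioi fun ξ hξ => ?_
      rw [abs_of_nonpos (sub_nonpos.2 (hmono' ξ hξ))]
    rw [h2, integral_neg, integral_Ioi_of_hasDerivAt_of_tendsto'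
        (f' := fun ξ => p (ξ + x) - p ξ) (fun ξ _ => hG ξ) hdiff.integrableOn hTop]
    ring
  have hsplit : ∫ ξ : ℝ, |p (ξ + x) - p ξ| = 2 * (F (c + x) - F c) := by
    rw [← intervalIntegral.integral_Iic_add_Ioi (b := c) habs.integrableOn habs.integrableOn, hIic, hIoi]
    ring
  -- bound the value
  have hval : F (c + x) - F c ≤ x / (Real.pi * δ) := by
    have hcx : c + x = x / 2 := by rw [hc]; ring
    have hneg : c / δ = -(x / 2 / δ) := by rw [hc]; ring
    have harc : Real.arctan (x / 2 / δ) ≤ x / 2 / δ := arctan_le_self' (by positivity)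
    simp only [hF, hcx, hneg, Real.arctan_neg]
    have : (1 / Real.pi) * Real.arctan (x / 2 / δ) -
        (1 / Real.pi) * (-Real.arctan (x / 2 / δ)) =
        (2 / Real.pi) * Real.arctan (x / 2 / δ) := by ring
    rw [this]
    calc (2 / Real.pi) * Real.arctan (x / 2 / δ) ≤ (2 / Real.pi) * (x / 2 / δ) := by
          gcongr
      _ = x / (Real.pi * δ) := by field_simp
  calc ∫ ξ : ℝ, |p (ξ + x) - p ξ| = 2 * (F (c + x) - F c) := hsplit
    _ ≤ 2 * (x / (Real.pi * δ)) := by linarith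
    _ = (2 / (Real.pi * δ)) * x := by ring

/-- Variation bound for the Cauchy density `p_δ(y) = δ/(π(δ² + y²))`:
for every shift `x`, `∫ |p_δ(ξ + x) − p_δ(ξ)| dξ ≤ (2/(πδ))·|x|`. -/
theorem cauchy_density_variation (δ : ℝ) (hδ : 0 < δ) :
    ∀ x : ℝ,
      ∫ ξ : ℝ, |δ / (Real.pi * (δ ^ 2 + (ξ + x) ^ 2)) -
          δ / (Real.pi * (δ ^ 2 + ξ ^ 2))| ≤ (2 / (Real.pi * δ)) * |x| := by
  intro x
  rcases le_or_gt 0 x with hx | hx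
  · rw [abs_of_nonneg hx]
    exact cauchy_variation_nonneg δ hδ x hx
  · set p : ℝ → ℝ := fun ξ => δ / (Real.pi * (δ ^ 2 + ξ ^ 2)) with hp
    have key : ∫ ξ : ℝ, |p (ξ + x) - p ξ| = ∫ ξ : ℝ, |p (ξ + (-x)) - p ξ| := by
      have := integral_add_right_eq_self (μ := volume) (fun ξ : ℝ => |p (ξ + x) - p ξ|) (-x)
      rw [← this]
      congr 1
      funext ξ
      rw [abs_sub_comm]
      ring_nf
    rw [abs_of_neg hx]
    calc ∫ ξ : ℝ, |p (ξ + x) - p ξ| = ∫ ξ : ℝ, |p (ξ + (-x)) - p ξ| := key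
      _ ≤ (2 / (Real.pi * δ)) * (-x) := cauchy_variation_nonneg δ hδ (-x) (by linarith)
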